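/- Suppose each f_i is convex and L_i-smooth and x* is a global minimizer of F (so ∇F(x*) = 0). Let p be a probability vector with positive entries, x, w ∈ ℝ^d, η > 0, β > 0, and g_i = (1/(n p_i))(∇f_i(x) − ∇f_i(w)) + ∇F(w). Then ∑_{i=1}^n p_i ⟨g_i − ∇F(x), −ηg_i⟩ ≥ −2βL̄(F(x) − F(x*)) − βL̄·D(w) − (β/2)(V_e(p; x, w) − V_e(p^IS; x, w)) − (1/(2β))∑_{i=1}^n p_i ‖ηg_i‖², where D(w) = (1/n)∑_{i=1}^n (1/L_i)‖∇f_i(w) − ∇f_i(x*)‖². -/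

import Mathlib

open MeasureTheory Finset
open scoped RealInnerProductSpace BigOperators

abbrev Euc (d : ℕ) := EuclideanSpace ℝ (Fin d)

/-- The finite-sum objective `F(x) = (1/n) ∑ f i x`. -/
noncomputable def avgF {d : ℕ} (n : ℕ) (f : Fin n → Euc d → ℝ) (x : Euc d) : ℝ :=
  (1 / (n : ℝ)) * ∑ i, f i x

/-- The gradient of the finite-sum objective, `∇F(x) = (1/n) ∑ ∇f i x`. -/
noncomputable def avgG {d : ℕ} (n : ℕ) (f' : Fin n → Euc d → Euc d) (x : Euc d) : Euc d :=
  (1 / (n : ℝ)) • ∑ i, f' i x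

/-- The effective sampling variance `V_e(q; x, w)`. -/
noncomputable def Ve {d : ℕ} (n : ℕ) (f' : Fin n → Euc d → Euc d)
    (q : Fin n → ℝ) (x w : Euc d) : ℝ :=
  (1 / (n : ℝ) ^ 2) * ∑ i, (1 / q i) * ‖f' i x - f' i w‖ ^ 2

/-- The average smoothness constant `L̄ = (1/n) ∑ L i`. -/
noncomputable def Lbar (n : ℕ) (L : Fin n → ℝ) : ℝ := (1 / (n : ℝ)) * ∑ i, L i

/-- The importance sampling distribution `p^IS_i = L i / (n L̄)`. -/
noncomputable def pIS (n : ℕ) (L : Fin n → ℝ) (i : Fin n) : ℝ :=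
  L i / ((n : ℝ) * Lbar n L)

/-- `D(w) = (1/n) ∑ (1 / L i) ‖∇f i w - ∇f i x*‖²`. -/
noncomputable def Dfun {d : ℕ} (n : ℕ) (f' : Fin n → Euc d → Euc d) (L : Fin n → ℝ)
    (xstar w : Euc d) : ℝ :=
  (1 / (n : ℝ)) * ∑ i, (1 / L i) * ‖f' i w - f' i xstar‖ ^ 2

/-- Derivative of `f` along the line `t ↦ u + t • v`. -/
lemma line_deriv_aux {d : ℕ} (f : Euc d → ℝ) (f' : Euc d → Euc d)
    (hgrad : ∀ x, HasGradientAt f (f' x) x) (u v : Euc d) (t : ℝ) :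
    HasDerivAt (fun t : ℝ => f (u + t • v)) ⟪f' (u + t • v), v⟫ t := by
  have h1 : HasDerivAt (fun t : ℝ => u + t • v) v t := by
    simpa using ((hasDerivAt_id t).smul_const v).const_add u
  have h2 := (hgrad (u + t • v)).hasFDerivAt
  have h3 := h2.comp_hasDerivAt t h1
  simp [InnerProductSpace.toDual_apply_apply] at h3
  exact h3

/-- The descent lemma for `L`-smooth functions. -/
lemma descent_lemma_aux {d : ℕ} (f : Euc d → ℝ) (f' : Euc d → Euc d) (L : ℝ) (hL : 0 < L)
    (hgrad : ∀ x, HasGradientAt f (f' x) x)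
    (hlip : ∀ x y, ‖f' x - f' y‖ ≤ L * ‖x - y‖) (u z : Euc d) :
    f z ≤ f u + ⟪f' u, z - u⟫ + L / 2 * ‖z - u‖ ^ 2 := by
  set v := z - u with hv
  set φ : ℝ → ℝ := fun t => f (u + t • v) - t * ⟪f' u, v⟫ - L / 2 * t ^ 2 * ‖v‖ ^ 2 with hφ
  have hder : ∀ t : ℝ, HasDerivAt φ (⟪f' (u + t • v), v⟫ - ⟪f' u, v⟫ - L * t * ‖v‖ ^ 2) t := by
    intro t
    have h1 := line_deriv_aux f f' hgrad u v t
    have h2 : HasDerivAt (fun t : ℝ => t * ⟪f' u, v⟫) ⟪f' u, v⟫ t := by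
      simpa using (hasDerivAt_id t).mul_const ⟪f' u, v⟫
    have h3 : HasDerivAt (fun t : ℝ => L / 2 * t ^ 2 * ‖v‖ ^ 2) (L * t * ‖v‖ ^ 2) t := by
      have := ((hasDerivAt_pow 2 t).const_mul (L / 2)).mul_const (‖v‖ ^ 2)
      refine this.congr_deriv ?_
      ring
    exact (h1.sub h2).sub h3
  have hmono : AntitoneOn φ (Set.Icc (0:ℝ) 1) := by
    apply antitoneOn_of_deriv_nonpos (convex_Icc 0 1)
    · exact fun t _ => ((hder t).continuousAt).continuousWithinAt
    · exact fun t _ => ((hder t).differentiableAt).differentiableWithinAt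
    · intro t ht
      rw [interior_Icc] at ht
      rw [(hder t).deriv]
      have hcs : ⟪f' (u + t • v) - f' u, v⟫ ≤ ‖f' (u + t • v) - f' u‖ * ‖v‖ :=
        real_inner_le_norm _ _
      have hl := hlip (u + t • v) u
      have heq : ‖u + t • v - u‖ = t * ‖v‖ := by
        rw [add_sub_cancel_left, norm_smul, Real.norm_eq_abs, abs_of_pos ht.1]
      rw [heq] at hl
      have hinner : ⟪f' (u + t • v) - f' u, v⟫ = ⟪f' (u + t • v), v⟫ - ⟪f' u, v⟫ :=
        inner_sub_left _ _ _
      nlinarith [norm_nonneg v, norm_nonneg (f' (u + t • v) - f' u), ht.1.le]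
  have h01 := hmono (Set.mem_Icc.2 ⟨le_refl 0, zero_le_one⟩)
    (Set.mem_Icc.2 ⟨zero_le_one, le_refl 1⟩) zero_le_one
  have hz : u + (1:ℝ) • v = z := by rw [one_smul, hv]; abel
  simp only [hφ, hz, zero_smul, add_zero, one_pow, zero_pow, mul_zero, zero_mul, sub_zero] at h01
  linarith

/-- Cocoercivity of gradients for convex smooth functions. -/
lemma cocoercivity_aux {d : ℕ} (f : Euc d → ℝ) (f' : Euc d → Euc d) (L : ℝ) (hL : 0 < L)
    (hgrad : ∀ x, HasGradientAt f (f' x) x)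
    (hconv : ∀ x y, f x + ⟪f' x, y - x⟫ ≤ f y)
    (hlip : ∀ x y, ‖f' x - f' y‖ ≤ L * ‖x - y‖) (x y : Euc d) :
    ‖f' x - f' y‖ ^ 2 ≤ 2 * L * (f x - f y - ⟪f' y, x - y⟫) := by
  set G := f' x - f' y with hG
  set z := x - (1 / L) • G with hz
  have hdesc := descent_lemma_aux f f' L hL hgrad hlip x z
  have hcv := hconv y z
  have hzx : z - x = -((1 / L) • G) := by rw [hz]; abel
  have hzy : z - y = (x - y) - (1 / L) • G := by rw [hz]; abel
  have e1 : ⟪f' x, z - x⟫ = -(1 / L) * ⟪f' x, G⟫ := by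
    rw [hzx, inner_neg_right, real_inner_smul_right]; ring
  have e2 : ‖z - x‖ ^ 2 = (1 / L) ^ 2 * ‖G‖ ^ 2 := by
    rw [hzx, norm_neg, norm_smul, mul_pow, Real.norm_eq_abs, sq_abs]
  have e3 : ⟪f' y, z - y⟫ = ⟪f' y, x - y⟫ - (1 / L) * ⟪f' y, G⟫ := by
    rw [hzy, inner_sub_right, real_inner_smul_right]
  have e4 : ⟪f' x, G⟫ - ⟪f' y, G⟫ = ‖G‖ ^ 2 := by
    rw [← inner_sub_left, ← hG, real_inner_self_eq_norm_sq]
  rw [e1, e2] at hdesc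
  rw [e3] at hcv
  have e4' : (1 / L) * ⟪f' x, G⟫ - (1 / L) * ⟪f' y, G⟫ = (1 / L) * ‖G‖ ^ 2 := by
    rw [← mul_sub, e4]
  have e5 : L / 2 * ((1 / L) ^ 2 * ‖G‖ ^ 2) = 1 / (2 * L) * ‖G‖ ^ 2 := by
    field_simp
  rw [e5] at hdesc
  have e6 : 1 / L * ‖G‖ ^ 2 = 2 * (1 / (2 * L) * ‖G‖ ^ 2) := by ring
  have key : 1 / (2 * L) * ‖G‖ ^ 2 ≤ f x - f y - ⟪f' y, x - y⟫ := by linarith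
  have := mul_le_mul_of_nonneg_left key (by positivity : (0:ℝ) ≤ 2 * L)
  calc ‖G‖ ^ 2 = 2 * L * (1 / (2 * L) * ‖G‖ ^ 2) := by field_simp
    _ ≤ 2 * L * (f x - f y - ⟪f' y, x - y⟫) := this

/-- The average gradient vanishes at a global minimizer. -/
lemma avgG_min_zero_aux {d n : ℕ} (f : Fin n → Euc d → ℝ) (f' : Fin n → Euc d → Euc d)
    (hgrad : ∀ i x, HasGradientAt (f i) (f' i x) x) (xstar : Euc d)
    (hmin : ∀ y, avgF n f xstar ≤ avgF n f y) : avgG n f' xstar = 0 := by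
  set D : Euc d →L[ℝ] ℝ :=
    (1 / (n : ℝ)) • ∑ i, (InnerProductSpace.toDual ℝ (Euc d)) (f' i xstar) with hD
  have hF : HasFDerivAt (avgF n f) D xstar := by
    have hsum : HasFDerivAt (fun x => ∑ i, f i x)
        (∑ i, (InnerProductSpace.toDual ℝ (Euc d)) (f' i xstar)) xstar :=
      HasFDerivAt.fun_sum (fun i _ => (hgrad i xstar).hasFDerivAt)
    have h2 := hsum.const_smul (1 / (n : ℝ))
    have heq : avgF n f = fun x => (1 / (n : ℝ)) • ∑ i, f i x := by
      funext x; simp [avgF, smul_eq_mul]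
    rw [heq, hD]; exact h2
  have hloc : IsLocalMin (avgF n f) xstar := Filter.Eventually.of_forall hmin
  have hD0 : D = 0 := hloc.hasFDerivAt_eq_zero hF
  have hev : ∀ v : Euc d, ⟪avgG n f' xstar, v⟫ = D v := by
    intro v
    rw [hD]
    simp only [ContinuousLinearMap.smul_apply, ContinuousLinearMap.coe_sum', Finset.sum_apply,
      InnerProductSpace.toDual_apply_apply, smul_eq_mul, avgG]
    rw [real_inner_smul_left, sum_inner]
  have h0 : ⟪avgG n f' xstar, avgG n f' xstar⟫ = 0 := by rw [hev, hD0]; simp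
  exact inner_self_eq_zero.mp h0

/-- Young's inequality for inner products. -/
lemma young_ineq_aux {d : ℕ} (β : ℝ) (hβ : 0 < β) (a b : Euc d) :
    -(β / 2) * ‖a‖ ^ 2 - 1 / (2 * β) * ‖b‖ ^ 2 ≤ ⟪a, b⟫ := by
  have h0 : (0:ℝ) ≤ ‖β • a + b‖ ^ 2 := sq_nonneg _
  rw [norm_add_sq_real, norm_smul, real_inner_smul_left, Real.norm_eq_abs,
    abs_of_pos hβ, mul_pow] at h0
  have h1 : 1 / (2 * β) * (β ^ 2 * ‖a‖ ^ 2 + 2 * (β * ⟪a, b⟫) + ‖b‖ ^ 2) =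
      β / 2 * ‖a‖ ^ 2 + ⟪a, b⟫ + 1 / (2 * β) * ‖b‖ ^ 2 := by
    field_simp
  nlinarith [mul_le_mul_of_nonneg_left h0 (by positivity : (0:ℝ) ≤ 1 / (2 * β))]

/-- Weighted variance identity. -/
lemma weighted_var_aux {d n : ℕ} (p : Fin n → ℝ) (hp1 : ∑ i, p i = 1) (b : Fin n → Euc d) :
    ∑ i, p i * ‖b i - ∑ j, p j • b j‖ ^ 2 =
      ∑ i, p i * ‖b i‖ ^ 2 - ‖∑ j, p j • b j‖ ^ 2 := by
  set h := ∑ j, p j • b j with hh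
  have hsum : ∑ i, p i * ⟪b i, h⟫ = ‖h‖ ^ 2 := by
    calc ∑ i, p i * ⟪b i, h⟫ = ⟪∑ i, p i • b i, h⟫ := by
          rw [sum_inner]
          exact (Finset.sum_congr rfl fun i _ => (real_inner_smul_left _ _ _)).symm
      _ = ‖h‖ ^ 2 := by rw [← hh, real_inner_self_eq_norm_sq]
  calc ∑ i, p i * ‖b i - h‖ ^ 2
      = ∑ i, (p i * ‖b i‖ ^ 2 - 2 * (p i * ⟪b i, h⟫) + p i * ‖h‖ ^ 2) :=
        Finset.sum_congr rfl fun i _ => by rw [norm_sub_sq_real]; ring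
    _ = ∑ i, p i * ‖b i‖ ^ 2 - 2 * ∑ i, p i * ⟪b i, h⟫ + (∑ i, p i) * ‖h‖ ^ 2 := by
        rw [Finset.sum_add_distrib, Finset.sum_sub_distrib, ← Finset.mul_sum, Finset.sum_mul]
    _ = ∑ i, p i * ‖b i‖ ^ 2 - ‖h‖ ^ 2 := by rw [hsum, hp1]; ring

set_option maxHeartbeats 2000000 in
/-- lower bound on the inner-product term in the weakly convex analysis. -/
theorem as_lsvrg_inner_product_lower_bound (d n : ℕ) (hd : 0 < d) (hn : 0 < n)
    (f : Fin n → Euc d → ℝ) (f' : Fin n → Euc d → Euc d) (L : Fin n → ℝ)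
    (hgrad : ∀ i x, HasGradientAt (f i) (f' i x) x)
    (hconv : ∀ i x y, f i x + ⟪f' i x, y - x⟫ ≤ f i y)
    (hLpos : ∀ i, 0 < L i)
    (hsmooth : ∀ i x y, ‖f' i x - f' i y‖ ≤ L i * ‖x - y‖)
    (xstar : Euc d) (hmin : ∀ y, avgF n f xstar ≤ avgF n f y)
    (p : Fin n → ℝ) (hp : ∀ i, 0 < p i) (hp1 : ∑ i, p i = 1)
    (x w : Euc d) (η β : ℝ) (hη : 0 < η) (hβ : 0 < β)
    (g : Fin n → Euc d)
    (hg : ∀ i, g i = (1 / ((n : ℝ) * p i)) • (f' i x - f' i w) + avgG n f' w) :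
    ∑ i, p i * ⟪g i - avgG n f' x, -(η • g i)⟫ ≥
      -(2 * β * Lbar n L * (avgF n f x - avgF n f xstar)) -
      β * Lbar n L * Dfun n f' L xstar w -
      (β / 2) * (Ve n f' p x w - Ve n f' (pIS n L) x w) -
      (1 / (2 * β)) * ∑ i, p i * ‖η • g i‖ ^ 2 := by
  have hn' : (0:ℝ) < n := by exact_mod_cast hn
  have hn0 : (n:ℝ) ≠ 0 := ne_of_gt hn'
  set b : Fin n → Euc d := fun i => (1 / ((n : ℝ) * p i)) • (f' i x - f' i w) with hb
  -- Step 1: ∑ p i • b i = avgG x - avgG w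
  have hpb : ∀ i, p i • b i = (1 / (n : ℝ)) • (f' i x - f' i w) := by
    intro i
    rw [hb, smul_smul]
    congr 1
    field_simp
    exact div_self (hp i).ne'
  have hsumb : ∑ j, p j • b j = avgG n f' x - avgG n f' w := by
    rw [Finset.sum_congr rfl fun i _ => hpb i, ← Finset.smul_sum, avgG, avgG,
      Finset.sum_sub_distrib, smul_sub]
  -- g i - avgG x = b i - ∑ p j • b j
  have hgx : ∀ i, g i - avgG n f' x = b i - ∑ j, p j • b j := by
    intro i
    rw [hsumb, hg i]
    simp only [hb]
    abel
  -- Step 2: Young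
  have hyoung : ∀ i, p i * (-(β / 2) * ‖g i - avgG n f' x‖ ^ 2 - 1 / (2 * β) * ‖η • g i‖ ^ 2)
      ≤ p i * ⟪g i - avgG n f' x, -(η • g i)⟫ := by
    intro i
    apply mul_le_mul_of_nonneg_left _ (hp i).le
    have h := young_ineq_aux β hβ (g i - avgG n f' x) (-(η • g i))
    simpa [norm_neg] using h
  have hyoungsum : -(β / 2) * ∑ i, p i * ‖g i - avgG n f' x‖ ^ 2
      - 1 / (2 * β) * ∑ i, p i * ‖η • g i‖ ^ 2
      ≤ ∑ i, p i * ⟪g i - avgG n f' x, -(η • g i)⟫ := by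
    have h1 := Finset.sum_le_sum (fun i (_ : i ∈ Finset.univ) => hyoung i)
    have h2 : ∑ i, p i * (-(β / 2) * ‖g i - avgG n f' x‖ ^ 2 - 1 / (2 * β) * ‖η • g i‖ ^ 2)
        = -(β / 2) * ∑ i, p i * ‖g i - avgG n f' x‖ ^ 2
          - 1 / (2 * β) * ∑ i, p i * ‖η • g i‖ ^ 2 := by
      rw [Finset.mul_sum, Finset.mul_sum, ← Finset.sum_sub_distrib]
      exact Finset.sum_congr rfl fun i _ => by ring
    linarith
  -- Step 3: variance bound
  have hbnorm : ∑ i, p i * ‖b i‖ ^ 2 = Ve n f' p x w := by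
    rw [Ve, Finset.mul_sum]
    refine Finset.sum_congr rfl fun i _ => ?_
    rw [hb]
    rw [norm_smul, mul_pow, Real.norm_eq_abs, abs_of_pos (one_div_pos.mpr (mul_pos hn' (hp i)))]
    have hpi := (hp i).ne'
    field_simp
  have hvar : ∑ i, p i * ‖g i - avgG n f' x‖ ^ 2 ≤ Ve n f' p x w := by
    rw [Finset.sum_congr rfl fun i _ => by rw [hgx i]]
    rw [weighted_var_aux p hp1 b, hbnorm]
    have := sq_nonneg ‖∑ j, p j • b j‖
    linarith
  -- Step 4: cocoercivity sum
  have hG0 : avgG n f' xstar = 0 := avgG_min_zero_aux f f' hgrad xstar hmin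
  have hsumstar : ∑ i, f' i xstar = 0 := by
    rw [avgG] at hG0
    have h1 : (1 / (n:ℝ)) ≠ 0 := ne_of_gt (one_div_pos.mpr hn')
    exact (smul_eq_zero.mp hG0).resolve_left h1
  have hkey1 : (1 / (n:ℝ)) * ∑ i, (1 / L i) * ‖f' i x - f' i xstar‖ ^ 2
      ≤ 2 * (avgF n f x - avgF n f xstar) := by
    have hterm : ∀ i, (1 / L i) * ‖f' i x - f' i xstar‖ ^ 2 ≤
        2 * (f i x - f i xstar - ⟪f' i xstar, x - xstar⟫) := by
      intro i
      have hco := cocoercivity_aux (f i) (f' i) (L i) (hLpos i) (hgrad i) (hconv i)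
        (hsmooth i) x xstar
      set X := f i x - f i xstar - ⟪f' i xstar, x - xstar⟫ with hX
      have h1 := mul_le_mul_of_nonneg_left hco
        (le_of_lt (one_div_pos.mpr (hLpos i)))
      have h1' : 1 / L i * ‖f' i x - f' i xstar‖ ^ 2 ≤ (1 / L i * (2 * L i)) * X := by
        rw [mul_assoc]; exact h1
      have h2 : 1 / L i * (2 * L i) = 2 := by
        field_simp
        exact div_self (hLpos i).ne'
      rw [h2] at h1'
      exact h1'
    have hsumle := Finset.sum_le_sum (fun i (_ : i ∈ Finset.univ) => hterm i)
    have hinner0 : ∑ i, ⟪f' i xstar, x - xstar⟫ = 0 := by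
      rw [← sum_inner, hsumstar, inner_zero_left]
    have h3 : ∑ i, 2 * (f i x - f i xstar - ⟪f' i xstar, x - xstar⟫) =
        2 * (∑ i, f i x) - 2 * ∑ i, f i xstar := by
      simp_rw [mul_sub]
      rw [Finset.sum_sub_distrib, Finset.sum_sub_distrib, ← Finset.mul_sum, ← Finset.mul_sum,
        ← Finset.mul_sum, hinner0]
      ring
    rw [h3] at hsumle
    have hmul := mul_le_mul_of_nonneg_left hsumle
      (le_of_lt (one_div_pos.mpr hn'))
    rw [avgF, avgF]
    have he : (1 / (n:ℝ)) * (2 * (∑ i, f i x) - 2 * ∑ i, f i xstar) =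
        2 * ((1 / (n:ℝ)) * ∑ i, f i x - (1 / (n:ℝ)) * ∑ i, f i xstar) := by ring
    linarith
  -- Step 5: Ve at pIS
  have hLsum : (0:ℝ) < ∑ i, L i :=
    Finset.sum_pos (fun i _ => hLpos i) (Finset.univ_nonempty_iff.mpr ⟨⟨0, hn⟩⟩)
  have hLbar : 0 < Lbar n L := by
    rw [Lbar]; exact mul_pos (one_div_pos.mpr hn') hLsum
  have hVeIS : Ve n f' (pIS n L) x w =
      Lbar n L * ((1 / (n:ℝ)) * ∑ i, (1 / L i) * ‖f' i x - f' i w‖ ^ 2) := by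
    rw [Ve, Finset.mul_sum, Finset.mul_sum, Finset.mul_sum]
    refine Finset.sum_congr rfl fun i _ => ?_
    rw [pIS]
    have hne1 := (hLpos i).ne'
    have hne2 := hLbar.ne'
    field_simp
  -- Step 6: triangle-type bound
  have htri : ∀ i, (1 / L i) * ‖f' i x - f' i w‖ ^ 2 ≤
      2 * ((1 / L i) * ‖f' i x - f' i xstar‖ ^ 2) +
      2 * ((1 / L i) * ‖f' i w - f' i xstar‖ ^ 2) := by
    intro i
    have h := norm_sub_le (f' i x - f' i xstar) (f' i w - f' i xstar)
    have he : (f' i x - f' i xstar) - (f' i w - f' i xstar) = f' i x - f' i w := by abel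
    rw [he] at h
    have hLi : (0:ℝ) < 1 / L i := one_div_pos.mpr (hLpos i)
    have hsq : ‖f' i x - f' i w‖ ^ 2 ≤
        2 * ‖f' i x - f' i xstar‖ ^ 2 + 2 * ‖f' i w - f' i xstar‖ ^ 2 := by
      nlinarith [norm_nonneg (f' i x - f' i xstar), norm_nonneg (f' i w - f' i xstar),
        norm_nonneg (f' i x - f' i w),
        sq_nonneg (‖f' i x - f' i xstar‖ - ‖f' i w - f' i xstar‖)]
    have hmul := mul_le_mul_of_nonneg_left hsq hLi.le
    have he2 : 1 / L i * (2 * ‖f' i x - f' i xstar‖ ^ 2 + 2 * ‖f' i w - f' i xstar‖ ^ 2) =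
        2 * ((1 / L i) * ‖f' i x - f' i xstar‖ ^ 2) +
        2 * ((1 / L i) * ‖f' i w - f' i xstar‖ ^ 2) := by ring
    linarith
  have hT : (1 / (n:ℝ)) * ∑ i, (1 / L i) * ‖f' i x - f' i w‖ ^ 2 ≤
      4 * (avgF n f x - avgF n f xstar) + 2 * Dfun n f' L xstar w := by
    have hs := Finset.sum_le_sum (fun i (_ : i ∈ Finset.univ) => htri i)
    have h3 : ∑ i, (2 * ((1 / L i) * ‖f' i x - f' i xstar‖ ^ 2) +
        2 * ((1 / L i) * ‖f' i w - f' i xstar‖ ^ 2)) =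
        2 * (∑ i, (1 / L i) * ‖f' i x - f' i xstar‖ ^ 2) +
        2 * ∑ i, (1 / L i) * ‖f' i w - f' i xstar‖ ^ 2 := by
      rw [Finset.sum_add_distrib, ← Finset.mul_sum, ← Finset.mul_sum]
    rw [h3] at hs
    have hmul := mul_le_mul_of_nonneg_left hs (le_of_lt (one_div_pos.mpr hn'))
    rw [Dfun]
    have he : (1 / (n:ℝ)) * (2 * (∑ i, (1 / L i) * ‖f' i x - f' i xstar‖ ^ 2) +
        2 * ∑ i, (1 / L i) * ‖f' i w - f' i xstar‖ ^ 2) =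
        2 * ((1 / (n:ℝ)) * ∑ i, (1 / L i) * ‖f' i x - f' i xstar‖ ^ 2) +
        2 * ((1 / (n:ℝ)) * ∑ i, (1 / L i) * ‖f' i w - f' i xstar‖ ^ 2) := by ring
    linarith
  -- Final assembly
  have hVeISbound : (β / 2) * Ve n f' (pIS n L) x w ≤
      2 * β * Lbar n L * (avgF n f x - avgF n f xstar) +
      β * Lbar n L * Dfun n f' L xstar w := by
    rw [hVeIS]
    have hmul := mul_le_mul_of_nonneg_left hT
      (le_of_lt (mul_pos (half_pos hβ) hLbar))
    have he1 : β / 2 * Lbar n L *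
        (4 * (avgF n f x - avgF n f xstar) + 2 * Dfun n f' L xstar w) =
        2 * β * Lbar n L * (avgF n f x - avgF n f xstar) +
        β * Lbar n L * Dfun n f' L xstar w := by ring
    have he2 : β / 2 * (Lbar n L *
        ((1 / (n:ℝ)) * ∑ i, (1 / L i) * ‖f' i x - f' i w‖ ^ 2)) =
        β / 2 * Lbar n L *
        ((1 / (n:ℝ)) * ∑ i, (1 / L i) * ‖f' i x - f' i w‖ ^ 2) := by ring
    linarith
  have hvar2 := mul_le_mul_of_nonneg_left hvar (le_of_lt (by positivity : (0:ℝ) < β / 2))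
  linarith [hyoungsum, hvar2, hVeISbound]
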